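/- For a single real variable, if f : ℝ → ℝ is real-analytic near a critical point x₀ that is not locally constant, with f vanishing to order m ≥ 2 at x₀, then the Łojasiewicz gradient inequality |f(y) − f(x₀)|^θ ≤ C|f′(y)| holds near x₀ with exponent θ = 1 − 1/m. -/

import Mathlib

open Filter Function Topology Nat

/-- Factorization of an analytic function vanishing to order `n`. -/
lemma analytic_factor {F : ℝ → ℝ} {x₀ : ℝ} (hF : AnalyticAt ℝ F x₀) {n : ℕ}
    (h0 : ∀ k < n, iteratedDeriv k F x₀ = 0) (hn : iteratedDeriv n F x₀ ≠ 0) :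
    ∃ g : ℝ → ℝ, AnalyticAt ℝ g x₀ ∧ g x₀ ≠ 0 ∧
      ∀ᶠ z in nhds x₀, F z = (z - x₀) ^ n * g z := by
  obtain ⟨p, hp⟩ := hF
  obtain ⟨r, hball⟩ := hp
  have hcoeff : ∀ k : ℕ, (k ! : ℝ) * p.coeff k = iteratedDeriv k F x₀ := by
    intro k
    rw [← nsmul_eq_mul, iteratedDeriv_eq_iteratedFDeriv]
    exact hball.factorial_smul (y := (1:ℝ)) k
  have hp' : HasFPowerSeriesAt F p x₀ := ⟨r, hball⟩
  have hfac : ∀ k : ℕ, ((k ! : ℝ)) ≠ 0 := fun k => Nat.cast_ne_zero.mpr (Nat.factorial_ne_zero _)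
  have hpn : p n ≠ 0 := by
    intro h
    apply hn
    rw [← hcoeff n, FormalMultilinearSeries.coeff_eq_zero.mpr h, mul_zero]
  have hp0 : p ≠ 0 := fun h => hpn (by simp [h])
  have horder : p.order = n := by
    rcases lt_trichotomy p.order n with h | h | h
    · exfalso
      have hz := h0 _ h
      rw [← hcoeff p.order] at hz
      have : p.coeff p.order = 0 := (mul_eq_zero.mp hz).resolve_left (hfac _)
      exact p.apply_order_ne_zero hp0 (FormalMultilinearSeries.coeff_eq_zero.mp this)
    · exact h
    · exact absurd (p.apply_eq_zero_of_lt_order h) hpn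
  refine ⟨(swap dslope x₀)^[n] F,
    ⟨_, hp'.has_fpower_series_iterate_dslope_fslope n⟩, ?_, ?_⟩
  · have := hp'.iterate_dslope_fslope_ne_zero hp0
    rwa [horder] at this
  · have := hp'.eq_pow_order_mul_iterate_dslope
    rw [horder] at this
    filter_upwards [Filter.Eventually.of_forall (f := nhds x₀) this] with z hz
    simpa [smul_eq_mul] using hz

/-- One-variable Łojasiewicz gradient inequality with explicit exponent θ = 1 - 1/m,
where m ≥ 2 is the order of vanishing of f - f(x₀) at the critical point x₀. -/
theorem lojasiewicz_one_dim_exponent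
    (f : ℝ → ℝ) (x₀ : ℝ) (hf : AnalyticAt ℝ f x₀)
    (hcrit : deriv f x₀ = 0) (m : ℕ) (hm : 2 ≤ m)
    (hvanish : ∀ k, 0 < k → k < m → iteratedDeriv k f x₀ = 0)
    (hnonzero : iteratedDeriv m f x₀ ≠ 0) :
    ∃ C > (0:ℝ), ∃ V ∈ nhds x₀,
      ∀ y ∈ V, |f y - f x₀| ^ ((1 : ℝ) - 1 / m) ≤ C * |deriv f y| := by
  have hm0 : (m : ℝ) ≠ 0 := by positivity
  set θ : ℝ := (1:ℝ) - 1 / m with hθ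
  have hθ0 : 0 ≤ θ := by
    rw [hθ, sub_nonneg]
    rw [div_le_one (by positivity)]
    exact_mod_cast le_trans one_le_two hm
  -- the function F = f - f x₀
  set F : ℝ → ℝ := fun y => f y - f x₀ with hFdef
  have hF : AnalyticAt ℝ F x₀ := hf.sub analyticAt_const
  have hderivF : deriv F = deriv f := by
    funext x
    simp only [hFdef]
    exact deriv_sub_const _
  have hiterF : ∀ k, 0 < k → iteratedDeriv k F x₀ = iteratedDeriv k f x₀ := by
    intro k hk
    obtain ⟨j, rfl⟩ := Nat.exists_eq_add_of_lt hk
    simp only [zero_add]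
    rw [iteratedDeriv_succ', hderivF, ← iteratedDeriv_succ']
  have hF0 : ∀ k < m, iteratedDeriv k F x₀ = 0 := by
    intro k hk
    rcases Nat.eq_zero_or_pos k with rfl | hkpos
    · simp [hFdef]
    · rw [hiterF k hkpos]; exact hvanish k hkpos hk
  have hFm : iteratedDeriv m F x₀ ≠ 0 := by
    rw [hiterF m (by omega)]; exact hnonzero
  obtain ⟨g, hg_an, hg_ne, hg_eq⟩ := analytic_factor hF hF0 hFm
  -- the derivative
  have hG : AnalyticAt ℝ (deriv f) x₀ := by
    have h1 : AnalyticAt ℝ (fun x => fderiv ℝ f x 1) x₀ :=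
      ((ContinuousLinearMap.apply ℝ ℝ (1:ℝ)).analyticAt _).comp hf.fderiv
    have : deriv f = fun x => fderiv ℝ f x 1 := by
      funext x; rw [fderiv_apply_one_eq_deriv]
    rwa [this]
  have hiterG : ∀ k, iteratedDeriv k (deriv f) x₀ = iteratedDeriv (k + 1) f x₀ := by
    intro k
    rw [iteratedDeriv_succ']
  have hG0 : ∀ k < m - 1, iteratedDeriv k (deriv f) x₀ = 0 := by
    intro k hk
    rw [hiterG]
    exact hvanish (k + 1) (by omega) (by omega)
  have hGm : iteratedDeriv (m - 1) (deriv f) x₀ ≠ 0 := by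
    rw [hiterG]
    have : m - 1 + 1 = m := by omega
    rw [this]
    exact hnonzero
  obtain ⟨h, hh_an, hh_ne, hh_eq⟩ := analytic_factor hG hG0 hGm
  -- constants
  have hgx : 0 < |g x₀| := abs_pos.mpr hg_ne
  have hhx : 0 < |h x₀| := abs_pos.mpr hh_ne
  set C : ℝ := (2 * |g x₀|) ^ θ * (2 / |h x₀|) with hC
  have hCpos : 0 < C := by
    apply mul_pos
    · exact Real.rpow_pos_of_pos (by linarith) θ
    · positivity
  -- neighborhood conditions from continuity
  have hgc : ∀ᶠ y in nhds x₀, |g y| ≤ 2 * |g x₀| := by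
    have : Tendsto (fun y => |g y|) (nhds x₀) (nhds (|g x₀|)) :=
      (hg_an.continuousAt.tendsto).abs
    exact (this.eventually_lt_const (by linarith)).mono fun y hy => le_of_lt hy
  have hhc : ∀ᶠ y in nhds x₀, |h x₀| / 2 ≤ |h y| := by
    have : Tendsto (fun y => |h y|) (nhds x₀) (nhds (|h x₀|)) :=
      (hh_an.continuousAt.tendsto).abs
    exact (this.eventually_const_lt (by linarith)).mono fun y hy => le_of_lt hy
  refine ⟨C, hCpos, {y | (F y = (y - x₀) ^ m * g y) ∧ (deriv f y = (y - x₀) ^ (m - 1) * h y)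
      ∧ |g y| ≤ 2 * |g x₀| ∧ |h x₀| / 2 ≤ |h y|}, ?_, ?_⟩
  · filter_upwards [hg_eq, hh_eq, hgc, hhc] with y h1 h2 h3 h4
    exact ⟨h1, h2, h3, h4⟩
  · rintro y ⟨h1, h2, h3, h4⟩
    have habs : |f y - f x₀| = |y - x₀| ^ m * |g y| := by
      rw [show f y - f x₀ = F y from rfl, h1, abs_mul, abs_pow]
    have habs' : |deriv f y| = |y - x₀| ^ (m - 1) * |h y| := by
      rw [h2, abs_mul, abs_pow]
    rw [habs, habs']
    have hy0 : (0:ℝ) ≤ |y - x₀| := abs_nonneg _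
    -- compute the rpow of the product
    have key : (|y - x₀| ^ m * |g y|) ^ θ = |y - x₀| ^ (m - 1) * |g y| ^ θ := by
      rw [Real.mul_rpow (by positivity) (abs_nonneg _)]
      congr 1
      rw [← Real.rpow_natCast |y - x₀| m, ← Real.rpow_mul hy0]
      have : (m : ℝ) * θ = ((m - 1 : ℕ) : ℝ) := by
        rw [hθ]
        have hm1 : ((m - 1 : ℕ) : ℝ) = (m : ℝ) - 1 := by
          have : (1:ℕ) ≤ m := by omega
          push_cast [Nat.cast_sub this]
          ring
        rw [hm1]
        field_simp
      rw [this, Real.rpow_natCast]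
    rw [key]
    calc |y - x₀| ^ (m - 1) * |g y| ^ θ
        ≤ (2 * |g x₀|) ^ θ * |y - x₀| ^ (m - 1) := by
          rw [mul_comm]
          apply mul_le_mul_of_nonneg_right _ (by positivity)
          exact Real.rpow_le_rpow (abs_nonneg _) h3 hθ0
      _ ≤ C * (|y - x₀| ^ (m - 1) * |h y|) := by
          rw [hC]
          have e : (2 * |g x₀|) ^ θ * (2 / |h x₀|) * (|y - x₀| ^ (m - 1) * |h y|)
              = (2 * |g x₀|) ^ θ * (|y - x₀| ^ (m - 1) * (2 / |h x₀| * |h y|)) := by ring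
          rw [e]
          apply mul_le_mul_of_nonneg_left _ (by positivity)
          have h1' : (1:ℝ) ≤ 2 / |h x₀| * |h y| := by
            rw [div_mul_eq_mul_div, le_div_iff₀ hhx]
            linarith
          exact le_mul_of_one_le_right (by positivity) h1'
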